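/- Let Θ be a nonempty finite type, let χ ∈ [0,1], let μ : Θ → ℝ be nonnegative with ∑_{θ∈Θ} μ(θ) = 1, and let σ : Θ → ℝ be nonnegative with σ̄ := ∑_{θ∈Θ} μ(θ)·σ(θ) > 0. Define the χ-cursed likelihood σ^χ(θ) := χ·σ̄ + (1-χ)·σ(θ). Then ∑_{θ∈Θ} μ(θ)·σ^χ(θ) = σ̄, and for every θ ∈ Θ the χ-cursed posterior satisfies μ(θ)·σ^χ(θ) / (∑_{θ'∈Θ} μ(θ')·σ^χ(θ')) = χ·μ(θ) + (1-χ)·( μ(θ)·σ(θ) / ∑_{θ'∈Θ} μ(θ')·σ(θ') ). -/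

import Mathlib

theorem cursed_bayes_rearrange {Θ : Type*} [Fintype Θ] [Nonempty Θ]
    (χ : ℝ) (hχ0 : 0 ≤ χ) (hχ1 : χ ≤ 1)
    (μ σ : Θ → ℝ) (hμ : ∀ θ, 0 ≤ μ θ) (hμsum : ∑ θ, μ θ = 1)
    (hσ : ∀ θ, 0 ≤ σ θ) (hbar : 0 < ∑ θ, μ θ * σ θ) :
    (∑ θ, μ θ * (χ * (∑ θ', μ θ' * σ θ') + (1 - χ) * σ θ)) = (∑ θ', μ θ' * σ θ') ∧
    ∀ θ, μ θ * (χ * (∑ θ', μ θ' * σ θ') + (1 - χ) * σ θ) /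
        (∑ θ', μ θ' * (χ * (∑ θ'', μ θ'' * σ θ'') + (1 - χ) * σ θ')) =
      χ * μ θ + (1 - χ) * (μ θ * σ θ / ∑ θ', μ θ' * σ θ') := by
  set S := ∑ θ, μ θ * σ θ with hS
  have hsum : (∑ θ, μ θ * (χ * S + (1 - χ) * σ θ)) = S := by
    simp only [mul_add, Finset.sum_add_distrib]
    rw [← Finset.sum_mul, hμsum]
    simp only [show ∀ θ, μ θ * ((1 - χ) * σ θ) = (1 - χ) * (μ θ * σ θ) from fun θ => by ring]
    rw [← Finset.mul_sum, ← hS]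
    ring
  refine ⟨hsum, fun θ => ?_⟩
  rw [hsum]
  have hS0 : S ≠ 0 := ne_of_gt hbar
  field_simp
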